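/- Define φ(p) = Σ_{n=1}^∞ (-1)^{n+1} pⁿ/(1 + (-1)ⁿ pⁿ)² for p ∈ (0,1). Then φ is continuous, φ(0⁺) = 0, φ(1/2) > 1/8, and φ is strictly monotonically increasing on (0, 1/2). Consequently there exists a unique p₀ ∈ (0, 1/2) with φ(p₀) = 1/8. -/

import Mathlib

open Filter Set

namespace Stmt6

noncomputable def f (n : ℕ) (p : ℝ) : ℝ :=
  (-1 : ℝ) ^ n * p ^ (n + 1) / (1 + (-1 : ℝ) ^ (n + 1) * p ^ (n + 1)) ^ 2

noncomputable def g (n : ℕ) (p : ℝ) : ℝ :=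
  (-1 : ℝ) ^ n * (n + 1) * p ^ n * (1 - (-1 : ℝ) ^ (n + 1) * p ^ (n + 1)) /
    (1 + (-1 : ℝ) ^ (n + 1) * p ^ (n + 1)) ^ 3

lemma abs_eps_pow (n : ℕ) (p : ℝ) :
    |(-1 : ℝ) ^ (n + 1) * p ^ (n + 1)| = |p| ^ (n + 1) := by
  rw [abs_mul, abs_pow, abs_pow, abs_neg, abs_one, one_pow, one_mul]

lemma eps_pow_le {p r : ℝ} (hr1 : r < 1) (hp : |p| ≤ r) (n : ℕ) :
    |(-1 : ℝ) ^ (n + 1) * p ^ (n + 1)| ≤ r := by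
  rw [abs_eps_pow]
  calc |p| ^ (n + 1) ≤ |p| ^ 1 :=
        pow_le_pow_of_le_one (abs_nonneg p) (hp.trans hr1.le) (Nat.le_add_left 1 n)
    _ = |p| := pow_one _
    _ ≤ r := hp

lemma denom_lb {p r : ℝ} (hr1 : r < 1) (hp : |p| ≤ r) (n : ℕ) :
    1 - r ≤ 1 + (-1 : ℝ) ^ (n + 1) * p ^ (n + 1) := by
  have := (abs_le.1 (eps_pow_le hr1 hp n)).1
  linarith

lemma denom_pos {p : ℝ} (hp : |p| < 1) (n : ℕ) :
    0 < 1 + (-1 : ℝ) ^ (n + 1) * p ^ (n + 1) := by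
  have h := denom_lb (r := |p|) hp le_rfl n
  linarith

lemma hasDerivAt_f {p : ℝ} (hp : |p| < 1) (n : ℕ) :
    HasDerivAt (f n) (g n p) p := by
  have hd := denom_pos hp n
  have hnum : HasDerivAt (fun q : ℝ => (-1 : ℝ) ^ n * q ^ (n + 1))
      ((-1 : ℝ) ^ n * ((n + 1 : ℕ) * p ^ n)) p := by
    simpa using (hasDerivAt_pow (n + 1) p).const_mul ((-1 : ℝ) ^ n)
  have hinner : HasDerivAt (fun q : ℝ => 1 + (-1 : ℝ) ^ (n + 1) * q ^ (n + 1))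
      ((-1 : ℝ) ^ (n + 1) * ((n + 1 : ℕ) * p ^ n)) p := by
    simpa using ((hasDerivAt_pow (n + 1) p).const_mul ((-1 : ℝ) ^ (n + 1))).const_add 1
  have hden : HasDerivAt (fun q : ℝ => (1 + (-1 : ℝ) ^ (n + 1) * q ^ (n + 1)) ^ 2)
      (2 * (1 + (-1 : ℝ) ^ (n + 1) * p ^ (n + 1)) ^ 1
        * ((-1 : ℝ) ^ (n + 1) * ((n + 1 : ℕ) * p ^ n))) p := by
    simpa using hinner.fun_pow 2
  have h := hnum.div hden (by positivity)
  have hne : (1 + (-1 : ℝ) ^ (n + 1) * p ^ (n + 1)) ≠ 0 := ne_of_gt hd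
  refine h.congr_deriv ?_
  unfold g
  field_simp
  push_cast
  ring

lemma g_bound {p r : ℝ} (hr0 : 0 ≤ r) (hr1 : r < 1) (hp : |p| ≤ r) (n : ℕ) :
    ‖g n p‖ ≤ 2 / (1 - r) ^ 3 * ((n + 1) * r ^ n) := by
  have hd := denom_lb hr1 hp n
  have hdpos : (0:ℝ) < 1 - r := by linarith
  have hdp : (0:ℝ) < 1 + (-1 : ℝ) ^ (n + 1) * p ^ (n + 1) := lt_of_lt_of_le hdpos hd
  have h1 : |(-1 : ℝ) ^ n * (n + 1)| = (n + 1 : ℝ) := by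
    rw [abs_mul, abs_pow, abs_neg, abs_one, one_pow, one_mul]
    exact abs_of_nonneg (by positivity)
  have h2 : |p ^ n| ≤ r ^ n := by
    rw [abs_pow]; exact pow_le_pow_left₀ (abs_nonneg p) hp n
  have h3 : |1 - (-1 : ℝ) ^ (n + 1) * p ^ (n + 1)| ≤ 2 := by
    have := abs_le.1 (eps_pow_le hr1 hp n)
    rw [abs_le]
    constructor <;> nlinarith [this.1, this.2]
  have hnum : |(-1 : ℝ) ^ n * (n + 1) * p ^ n * (1 - (-1 : ℝ) ^ (n + 1) * p ^ (n + 1))|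
      ≤ (n + 1) * r ^ n * 2 := by
    rw [abs_mul, abs_mul, h1]
    exact mul_le_mul (mul_le_mul_of_nonneg_left h2 (by positivity)) h3
      (abs_nonneg _) (by positivity)
  have hden : (1 - r) ^ 3 ≤ (1 + (-1 : ℝ) ^ (n + 1) * p ^ (n + 1)) ^ 3 :=
    pow_le_pow_left₀ hdpos.le hd 3
  have habs : |(1 + (-1 : ℝ) ^ (n + 1) * p ^ (n + 1)) ^ 3|
      = (1 + (-1 : ℝ) ^ (n + 1) * p ^ (n + 1)) ^ 3 := abs_of_pos (by positivity)
  have heq : ‖g n p‖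
      = |(-1 : ℝ) ^ n * (n + 1) * p ^ n * (1 - (-1 : ℝ) ^ (n + 1) * p ^ (n + 1))|
        / (1 + (-1 : ℝ) ^ (n + 1) * p ^ (n + 1)) ^ 3 := by
    unfold g
    rw [Real.norm_eq_abs, abs_div, habs]
  rw [heq]
  calc |(-1 : ℝ) ^ n * (n + 1) * p ^ n * (1 - (-1 : ℝ) ^ (n + 1) * p ^ (n + 1))|
        / (1 + (-1 : ℝ) ^ (n + 1) * p ^ (n + 1)) ^ 3
      ≤ (n + 1) * r ^ n * 2 / (1 - r) ^ 3 :=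
        div_le_div₀ (by positivity) hnum (by positivity) hden
    _ = 2 / (1 - r) ^ 3 * ((n + 1) * r ^ n) := by ring

lemma f_bound {p r : ℝ} (hr0 : 0 ≤ r) (hr1 : r < 1) (hp : |p| ≤ r) (n : ℕ) :
    ‖f n p‖ ≤ 1 / (1 - r) ^ 2 * r ^ n := by
  have hd := denom_lb hr1 hp n
  have hdpos : (0:ℝ) < 1 - r := by linarith
  have hdp : (0:ℝ) < 1 + (-1 : ℝ) ^ (n + 1) * p ^ (n + 1) := lt_of_lt_of_le hdpos hd
  have hnum : |(-1 : ℝ) ^ n * p ^ (n + 1)| ≤ r ^ n := by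
    rw [abs_mul, abs_pow, abs_neg, abs_one, one_pow, one_mul, abs_pow]
    calc |p| ^ (n + 1) ≤ r ^ (n + 1) := pow_le_pow_left₀ (abs_nonneg p) hp (n + 1)
      _ ≤ r ^ n := pow_le_pow_of_le_one hr0 hr1.le (Nat.le_succ n)
  have hden : (1 - r) ^ 2 ≤ (1 + (-1 : ℝ) ^ (n + 1) * p ^ (n + 1)) ^ 2 :=
    pow_le_pow_left₀ hdpos.le hd 2
  have habs : |(1 + (-1 : ℝ) ^ (n + 1) * p ^ (n + 1)) ^ 2|
      = (1 + (-1 : ℝ) ^ (n + 1) * p ^ (n + 1)) ^ 2 := abs_of_pos (by positivity)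
  have heq : ‖f n p‖ = |(-1 : ℝ) ^ n * p ^ (n + 1)|
      / (1 + (-1 : ℝ) ^ (n + 1) * p ^ (n + 1)) ^ 2 := by
    unfold f
    rw [Real.norm_eq_abs, abs_div, habs]
  rw [heq]
  have hdd := div_le_div₀ (by positivity : (0:ℝ) ≤ r ^ n) hnum (by positivity) hden
  calc |(-1 : ℝ) ^ n * p ^ (n + 1)| / (1 + (-1 : ℝ) ^ (n + 1) * p ^ (n + 1)) ^ 2
      ≤ r ^ n / (1 - r) ^ 2 := hdd
    _ = 1 / (1 - r) ^ 2 * r ^ n := by ring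

lemma summable_u {r : ℝ} (hr0 : 0 ≤ r) (hr1 : r < 1) :
    Summable (fun n : ℕ => 2 / (1 - r) ^ 3 * ((n + 1 : ℝ) * r ^ n)) := by
  apply Summable.mul_left
  have h1 : Summable (fun n : ℕ => (n : ℝ) * r ^ n) := by
    simpa using summable_pow_mul_geometric_of_norm_lt_one 1
      (r := r) (by rwa [Real.norm_eq_abs, abs_of_nonneg hr0])
  have h2 : Summable (fun n : ℕ => r ^ n) := summable_geometric_of_lt_one hr0 hr1
  simpa [add_mul] using h1.add h2

lemma f_zero (n : ℕ) : f n 0 = 0 := by simp [f]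

lemma summable_f {p : ℝ} (hp : |p| < 1) : Summable (fun n : ℕ => f n p) := by
  set r : ℝ := (|p| + 1) / 2 with hr
  have hr0 : 0 ≤ r := by positivity
  have hr1 : r < 1 := by rw [hr]; linarith
  have hpr : |p| ≤ r := by rw [hr]; linarith
  exact ((summable_geometric_of_lt_one hr0 hr1).mul_left _).of_norm_bounded
    (fun n => f_bound hr0 hr1 hpr n)

lemma summable_g {p : ℝ} (hp : |p| < 1) : Summable (fun n : ℕ => g n p) := by
  set r : ℝ := (|p| + 1) / 2 with hr
  have hr0 : 0 ≤ r := by positivity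
  have hr1 : r < 1 := by rw [hr]; linarith
  have hpr : |p| ≤ r := by rw [hr]; linarith
  exact (summable_u hr0 hr1).of_norm_bounded (fun n => g_bound hr0 hr1 hpr n)

lemma hasDerivAt_phi {p : ℝ} (hp : |p| < 1) :
    HasDerivAt (fun q : ℝ => ∑' n : ℕ, f n q) (∑' n : ℕ, g n p) p := by
  set r : ℝ := (|p| + 1) / 2 with hr
  have hr0 : 0 ≤ r := by positivity
  have hr1 : r < 1 := by rw [hr]; linarith
  have hpr : |p| < r := by rw [hr]; linarith
  have h0 : (0:ℝ) ∈ Metric.ball (0:ℝ) r := by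
    rw [mem_ball_zero_iff, norm_zero]
    have : (0:ℝ) ≤ |p| := abs_nonneg p
    rw [hr]; linarith
  refine hasDerivAt_tsum_of_isPreconnected (summable_u hr0 hr1) Metric.isOpen_ball
    (convex_ball (0:ℝ) r).isPreconnected
    (fun n y hy => hasDerivAt_f ?_ n)
    (fun n y hy => g_bound hr0 hr1 ?_ n) h0 ?_ ?_
  · rw [mem_ball_zero_iff, Real.norm_eq_abs] at hy; exact hy.trans hr1
  · rw [mem_ball_zero_iff, Real.norm_eq_abs] at hy; exact hy.le
  · simpa [f_zero] using summable_zero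
  · rwa [mem_ball_zero_iff, Real.norm_eq_abs]

end Stmt6

namespace Stmt6

lemma pair_pos {p : ℝ} (hp0 : 0 < p) (hp : p < 1/2) (k : ℕ) :
    0 < g (2*k) p + g (2*k+1) p := by
  have hp1 : p < 1 := by linarith
  have e1 : ((-1:ℝ)) ^ (2*k) = 1 := by rw [pow_mul]; norm_num
  have e2 : ((-1:ℝ)) ^ (2*k+1) = -1 := by rw [pow_succ, e1]; norm_num
  have e3 : ((-1:ℝ)) ^ (2*k+1+1) = 1 := by rw [pow_succ, e2]; norm_num
  have ht : (0:ℝ) < p ^ (2*k) := by positivity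
  set q : ℝ := p ^ (2*k+1) with hqdef
  set s : ℝ := p ^ (2*k+1+1) with hsdef
  have hq0 : (0:ℝ) < q := by rw [hqdef]; positivity
  have hq1 : q < 1 := pow_lt_one₀ hp0.le hp1 (by omega)
  have hs0 : (0:ℝ) < s := by rw [hsdef]; positivity
  have hs1 : s < 1 := pow_lt_one₀ hp0.le hp1 (by omega)
  have hg1 : g (2*k) p = ((2*k : ℕ) + 1 : ℝ) * p ^ (2*k) * (1 + q) / (1 - q) ^ 3 := by
    unfold g; rw [e1, e2, ← hqdef]; ring
  have hg2 : g (2*k+1) p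
      = -(((2*k+1 : ℕ) + 1 : ℝ) * q * (1 - s) / (1 + s) ^ 3) := by
    unfold g; rw [e2, e3, ← hqdef, ← hsdef]; ring
  rw [hg1, hg2]
  have hM : (0:ℝ) ≤ ((2*k : ℕ) + 1 : ℝ) * p ^ (2*k) := by positivity
  have hN : (0:ℝ) ≤ ((2*k+1 : ℕ) + 1 : ℝ) * q := by positivity
  have hA : ((2*k : ℕ) + 1 : ℝ) * p ^ (2*k)
      ≤ ((2*k : ℕ) + 1 : ℝ) * p ^ (2*k) * (1 + q) / (1 - q) ^ 3 := by
    rw [le_div_iff₀ (pow_pos (by linarith) 3)]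
    have hcube : (1 - q) ^ 3 ≤ 1 + q := by
      nlinarith [mul_pos hq0 hq0, mul_pos (mul_pos hq0 hq0) hq0]
    exact mul_le_mul_of_nonneg_left hcube hM
  have hB : ((2*k+1 : ℕ) + 1 : ℝ) * q * (1 - s) / (1 + s) ^ 3
      ≤ ((2*k+1 : ℕ) + 1 : ℝ) * q := by
    rw [div_le_iff₀ (pow_pos (by linarith) 3)]
    have hcube : 1 - s ≤ (1 + s) ^ 3 := by
      nlinarith [mul_pos hs0 hs0, mul_pos (mul_pos hs0 hs0) hs0]
    exact mul_le_mul_of_nonneg_left hcube hN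
  have hC : ((2*k+1 : ℕ) + 1 : ℝ) * q < ((2*k : ℕ) + 1 : ℝ) * p ^ (2*k) := by
    have hpow : q = p ^ (2*k) * p := by rw [hqdef, pow_succ]
    have hkc : (0:ℝ) ≤ (k:ℝ) := Nat.cast_nonneg k
    have h1 : (2*(k:ℝ)+1+1)*p < 2*(k:ℝ)+1 := by nlinarith
    have h2 := mul_lt_mul_of_pos_right h1 ht
    rw [hpow]
    push_cast
    nlinarith [h2]
  linarith

lemma hinj2 : Function.Injective (fun k : ℕ => 2*k) := by
  intro a b h
  simp only [] at h
  omega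

lemma hinj2' : Function.Injective (fun k : ℕ => 2*k+1) := by
  intro a b h
  simp only [] at h
  omega

lemma deriv_sum_pos {p : ℝ} (hp0 : 0 < p) (hp : p < 1/2) : 0 < ∑' n : ℕ, g n p := by
  have hp1 : |p| < 1 := by rw [abs_of_pos hp0]; linarith
  have hs := summable_g hp1
  have hse : Summable (fun k : ℕ => g (2*k) p) :=
    Summable.comp_injective (f := fun n : ℕ => g n p) (i := fun k : ℕ => 2*k) hs hinj2
  have hso : Summable (fun k : ℕ => g (2*k+1) p) :=
    Summable.comp_injective (f := fun n : ℕ => g n p) (i := fun k : ℕ => 2*k+1) hs hinj2'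
  have hEq : (∑' k : ℕ, g (2*k) p) + (∑' k : ℕ, g (2*k+1) p) = ∑' n : ℕ, g n p :=
    tsum_even_add_odd (f := fun n : ℕ => g n p) hse hso
  rw [← hEq, ← Summable.tsum_add hse hso]
  exact Summable.tsum_pos (hse.add hso) (fun k => (pair_pos hp0 hp k).le) 0 (pair_pos hp0 hp 0)

lemma vb_eq : (fun n : ℕ => (16/9:ℝ) * (1/2:ℝ)^(n+2)) = (fun n : ℕ => (4/9:ℝ) * (1/2:ℝ)^n) := by
  funext n
  rw [pow_add]
  ring

lemma hvb : Summable (fun n : ℕ => (16/9:ℝ) * (1/2:ℝ)^(n+2)) := by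
  rw [vb_eq]
  exact (summable_geometric_of_lt_one (by norm_num) (by norm_num)).mul_left _

lemma vb_tsum : ∑' n : ℕ, (16/9:ℝ) * (1/2:ℝ)^(n+2) = 8/9 := by
  rw [vb_eq, tsum_mul_left, tsum_geometric_two]
  norm_num

lemma phi_half : (1:ℝ)/8 < ∑' n : ℕ, f n (1/2) := by
  have h2 : |(1:ℝ)/2| < 1 := by rw [abs_of_pos] <;> norm_num
  have hs := summable_f h2
  rw [Summable.tsum_eq_zero_add hs]
  have h0 : f 0 ((1:ℝ)/2) = 2 := by norm_num [f]
  have hb : ∀ n : ℕ, ‖f (n+1) ((1:ℝ)/2)‖ ≤ 16/9 * (1/2:ℝ)^(n+2) := by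
    intro n
    have hidx : n + 1 + 1 = n + 2 := rfl
    have hc1 : ((1:ℝ)/2)^(n+2) ≤ 1/4 := by
      calc ((1:ℝ)/2)^(n+2) ≤ ((1:ℝ)/2)^2 :=
            pow_le_pow_of_le_one (by norm_num) (by norm_num) (by omega)
        _ = 1/4 := by norm_num
    have hc0 : (0:ℝ) < ((1:ℝ)/2)^(n+2) := by positivity
    have hD : (3/4:ℝ) ≤ 1 + (-1:ℝ)^(n+2) * ((1:ℝ)/2)^(n+2) := by
      rcases neg_one_pow_eq_or ℝ (n+2) with h | h <;> rw [h] <;> nlinarith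
    unfold f
    rw [hidx]
    have hDpos : (0:ℝ) < 1 + (-1:ℝ)^(n+2) * ((1:ℝ)/2)^(n+2) := by linarith
    have habs : |(1 + (-1:ℝ)^(n+2) * ((1:ℝ)/2)^(n+2)) ^ 2|
        = (1 + (-1:ℝ)^(n+2) * ((1:ℝ)/2)^(n+2)) ^ 2 := abs_of_pos (by positivity)
    rw [Real.norm_eq_abs, abs_div, habs, abs_mul, abs_pow, abs_neg, abs_one, one_pow,
      one_mul, abs_of_pos hc0]
    have hden : (9/16:ℝ) ≤ (1 + (-1:ℝ)^(n+2) * ((1:ℝ)/2)^(n+2)) ^ 2 := by nlinarith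
    calc ((1:ℝ)/2)^(n+2) / (1 + (-1:ℝ)^(n+2) * ((1:ℝ)/2)^(n+2)) ^ 2
        ≤ ((1:ℝ)/2)^(n+2) / (9/16) :=
          div_le_div_of_nonneg_left hc0.le (by norm_num) hden
      _ = 16/9 * (1/2:ℝ)^(n+2) := by ring
  have hnorm : Summable (fun n : ℕ => ‖f (n+1) ((1:ℝ)/2)‖) :=
    hvb.of_nonneg_of_le (fun n => norm_nonneg _) hb
  have hst : Summable (fun n : ℕ => f (n+1) ((1:ℝ)/2)) := hnorm.of_norm
  have htail : |∑' n : ℕ, f (n+1) ((1:ℝ)/2)| ≤ 8/9 := by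
    calc |∑' n : ℕ, f (n+1) ((1:ℝ)/2)| ≤ ∑' n : ℕ, ‖f (n+1) ((1:ℝ)/2)‖ := by
          simpa [Real.norm_eq_abs] using norm_tsum_le_tsum_norm hnorm
      _ ≤ ∑' n : ℕ, (16/9:ℝ) * (1/2:ℝ)^(n+2) := Summable.tsum_le_tsum hb hnorm hvb
      _ = 8/9 := vb_tsum
  have := abs_le.1 htail
  rw [h0]
  linarith [this.1]


lemma abs_lt_one_of_Ioo {p : ℝ} (hp : p ∈ Set.Ioo (0:ℝ) 1) : |p| < 1 := by
  rw [abs_of_pos hp.1]; exact hp.2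

lemma phi_cont : ContinuousOn (fun q : ℝ => ∑' n : ℕ, f n q) (Set.Ioo 0 1) :=
  fun p hp => ((hasDerivAt_phi (abs_lt_one_of_Ioo hp)).continuousAt).continuousWithinAt

lemma phi_zero : ∑' n : ℕ, f n (0:ℝ) = 0 := by simp [f_zero]

lemma phi_tendsto :
    Tendsto (fun q : ℝ => ∑' n : ℕ, f n q) (nhdsWithin 0 (Set.Ioo 0 1)) (nhds 0) := by
  have h : ContinuousAt (fun q : ℝ => ∑' n : ℕ, f n q) 0 :=
    (hasDerivAt_phi (p := 0) (by norm_num)).continuousAt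
  have h2 := h.tendsto
  rw [phi_zero] at h2
  exact h2.mono_left nhdsWithin_le_nhds

lemma phi_mono : StrictMonoOn (fun q : ℝ => ∑' n : ℕ, f n q) (Set.Ioo 0 (1/2)) := by
  apply strictMonoOn_of_deriv_pos (convex_Ioo 0 (1/2))
  · exact phi_cont.mono (fun x hx => ⟨hx.1, by linarith [hx.2]⟩)
  · intro x hx
    rw [interior_Ioo] at hx
    rw [(hasDerivAt_phi (by rw [abs_of_pos hx.1]; linarith [hx.2])).deriv]
    exact deriv_sum_pos hx.1 hx.2

lemma phi_exists_unique :
    ∃! p₀ : ℝ, p₀ ∈ Set.Ioo (0:ℝ) (1/2) ∧ (∑' n : ℕ, f n p₀) = 1/8 := by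
  haveI hne : (nhdsWithin (0:ℝ) (Set.Ioo 0 1)).NeBot := by
    rw [← mem_closure_iff_nhdsWithin_neBot, closure_Ioo (by norm_num : (0:ℝ) ≠ 1)]
    constructor <;> norm_num
  have h1 : ∀ᶠ x in nhdsWithin (0:ℝ) (Set.Ioo 0 1), (∑' n : ℕ, f n x) < 1/8 :=
    phi_tendsto.eventually (eventually_lt_nhds (by norm_num))
  have h2 : ∀ᶠ x in nhdsWithin (0:ℝ) (Set.Ioo 0 1), x < 1/4 :=
    Filter.Eventually.filter_mono nhdsWithin_le_nhds (eventually_lt_nhds (by norm_num))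
  have h3 : ∀ᶠ x in nhdsWithin (0:ℝ) (Set.Ioo 0 1), x ∈ Set.Ioo (0:ℝ) 1 :=
    eventually_mem_nhdsWithin
  obtain ⟨a, ha1, ha2, ha3⟩ := (h1.and (h2.and h3)).exists
  have hcb : ContinuousAt (fun q : ℝ => ∑' n : ℕ, f n q) (1/2) :=
    (hasDerivAt_phi (p := 1/2) (by rw [abs_of_pos] <;> norm_num)).continuousAt
  have hb1 : ∀ᶠ x in nhds (1/2:ℝ), 1/8 < (∑' n : ℕ, f n x) :=
    Filter.Tendsto.eventually hcb (eventually_gt_nhds phi_half)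
  haveI hb2 : (nhdsWithin (1/2:ℝ) (Set.Ioo a (1/2))).NeBot := by
    rw [← mem_closure_iff_nhdsWithin_neBot,
      closure_Ioo (show a ≠ 1/2 by intro h; rw [h] at ha2; norm_num at ha2)]
    exact ⟨by linarith, le_rfl⟩
  have hb1' : ∀ᶠ x in nhdsWithin (1/2:ℝ) (Set.Ioo a (1/2)), 1/8 < (∑' n : ℕ, f n x) :=
    hb1.filter_mono nhdsWithin_le_nhds
  obtain ⟨b, hb3, hb4⟩ := (hb1'.and eventually_mem_nhdsWithin).exists
  have hsub : Set.Icc a b ⊆ Set.Ioo 0 1 := fun x hx =>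
    ⟨lt_of_lt_of_le ha3.1 hx.1, lt_of_le_of_lt hx.2 (by linarith [hb4.2])⟩
  have hivt := intermediate_value_Ioo (le_of_lt hb4.1) (phi_cont.mono hsub)
  obtain ⟨p₀, hp₀, hφp₀⟩ := hivt ⟨ha1, hb3⟩
  have hp₀mem : p₀ ∈ Set.Ioo (0:ℝ) (1/2) :=
    ⟨lt_trans ha3.1 hp₀.1, lt_trans hp₀.2 hb4.2⟩
  refine ⟨p₀, ⟨hp₀mem, hφp₀⟩, ?_⟩
  intro q hq
  exact phi_mono.injOn hq.1 hp₀mem (hq.2.trans hφp₀.symm)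

end Stmt6

/-- The function `φ(p) = Σ_{n≥1} (-1)^{n+1} pⁿ/(1+(-1)ⁿ pⁿ)²` is continuous on `(0,1)`,
tends to `0` at `0⁺`, satisfies `φ(1/2) > 1/8`, is strictly increasing on `(0,1/2)`,
and hence takes the value `1/8` at a unique `p₀ ∈ (0,1/2)`. -/
theorem stmt6 :
    let φ : ℝ → ℝ := fun p =>
      ∑' n : ℕ, (-1 : ℝ) ^ n * p ^ (n + 1) / (1 + (-1 : ℝ) ^ (n + 1) * p ^ (n + 1)) ^ 2
    ContinuousOn φ (Set.Ioo 0 1) ∧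
    Filter.Tendsto φ (nhdsWithin 0 (Set.Ioo 0 1)) (nhds 0) ∧
    φ (1/2) > 1/8 ∧
    StrictMonoOn φ (Set.Ioo 0 (1/2)) ∧
    ∃! p₀ : ℝ, p₀ ∈ Set.Ioo (0:ℝ) (1/2) ∧ φ p₀ = 1/8 := by
  intro φ
  exact ⟨Stmt6.phi_cont, Stmt6.phi_tendsto, Stmt6.phi_half, Stmt6.phi_mono,
    Stmt6.phi_exists_unique⟩
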